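/- There exists a function T : ℂ → ℂ, complex-differentiable on the open ball B(0,1), with T(x) ∈ ℝ for every real x ∈ B(0,1), such that φ_→(z) = −4·(−z)^{1/2}·(1 + z·T(z)) for every z ∈ B(0,1) with z ∉ [0,∞). -/

import Mathlib

open Complex Metric MeasureTheory intervalIntegral Set

/-- `φ_→(z) = 2z·∫_0^1 (1−tz)^{1/2}·(−tz)^{−1/2} dt`, the integral of
`2(1−s)^{1/2}(−s)^{−1/2}` over the straight segment from `0` to `z` (principal powers). -/
noncomputable def phiRight (z : ℂ) : ℂ :=
  2 * z *
    ∫ t in (0:ℝ)..1, (1 - (t : ℂ) * z) ^ ((1 : ℂ)/2) * (-((t : ℂ) * z)) ^ (-((1 : ℂ)/2))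

namespace Stmt4

/-- the candidate `T` -/
noncomputable def Tfun (z : ℂ) : ℂ :=
  (1/2 : ℂ) * ∫ t in (0:ℝ)..1,
    ((t:ℂ) ^ ((1:ℂ)/2) - 1) * (1 - (t:ℂ) * z) ^ (-((1:ℂ)/2))

lemma c_ne : ((1:ℂ)/2) ≠ 0 := by norm_num
lemma nc_ne : (-((1:ℂ)/2)) ≠ 0 := by norm_num

lemma slit_mem {z : ℂ} (hz : ‖z‖ < 1) {t : ℝ} (ht0 : 0 ≤ t) (ht1 : t ≤ 1) :
    (1 - (t:ℂ) * z) ∈ Complex.slitPlane := by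
  rw [Complex.mem_slitPlane_iff]
  left
  have h1 : (1 - (t:ℂ) * z).re = 1 - t * z.re := by simp
  have h2 : |z.re| ≤ ‖z‖ := Complex.abs_re_le_norm z
  rw [h1]
  nlinarith [le_abs_self z.re, abs_nonneg z.re,
    mul_nonneg ht0 (sub_nonneg.mpr (le_abs_self z.re)),
    mul_nonneg (sub_nonneg.mpr ht1) (abs_nonneg z.re)]

lemma norm_one_sub_ge {z : ℂ} {t : ℝ} (ht0 : 0 ≤ t) (ht1 : t ≤ 1) :
    1 - ‖z‖ ≤ ‖1 - (t:ℂ) * z‖ := by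
  have h := norm_sub_norm_le (1:ℂ) ((t:ℂ) * z)
  have h2 : ‖(t:ℂ) * z‖ = t * ‖z‖ := by
    rw [norm_mul, Complex.norm_real, Real.norm_eq_abs, _root_.abs_of_nonneg ht0]
  have h3 : t * ‖z‖ ≤ ‖z‖ := by nlinarith [norm_nonneg z]
  simp only [norm_one] at h
  linarith

lemma contOn_one_sub {z : ℂ} (hz : ‖z‖ < 1) (a : ℂ) :
    ContinuousOn (fun t : ℝ => (1 - (t:ℂ) * z) ^ a) (Icc (0:ℝ) 1) := by
  apply ContinuousOn.cpow_const
  · exact (Continuous.sub continuous_const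
      ((Complex.continuous_ofReal).mul continuous_const)).continuousOn
  · intro t ht
    exact slit_mem hz ht.1 ht.2

lemma contOn_cpow_half :
    ContinuousOn (fun t : ℝ => (t:ℂ) ^ ((1:ℂ)/2)) (Icc (0:ℝ) 1) := by
  have hc : Continuous fun t : ℝ => t ^ (1/2 : ℝ) := Real.continuous_rpow_const (by norm_num)
  refine ((Complex.continuous_ofReal.comp hc).continuousOn).congr ?_
  intro t ht
  have := Complex.ofReal_cpow ht.1 (1/2 : ℝ)
  simpa [Complex.ofReal_div] using this.symm

lemma contOn_F {z : ℂ} (hz : ‖z‖ < 1) :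
    ContinuousOn (fun t : ℝ => ((t:ℂ) ^ ((1:ℂ)/2) - 1) * (1 - (t:ℂ) * z) ^ (-((1:ℂ)/2)))
      (Icc (0:ℝ) 1) :=
  (contOn_cpow_half.sub continuousOn_const).mul (contOn_one_sub hz _)



lemma cpow_ofReal_mul {t : ℝ} (ht : 0 < t) {w : ℂ} (hw : w ≠ 0) (a : ℂ) :
    ((t:ℂ) * w) ^ a = (t:ℂ) ^ a * w ^ a := by
  have ht' : (t:ℂ) ≠ 0 := by exact_mod_cast ht.ne'
  have htw : (t:ℂ) * w ≠ 0 := mul_ne_zero ht' hw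
  rw [Complex.cpow_def_of_ne_zero htw, Complex.cpow_def_of_ne_zero ht',
    Complex.cpow_def_of_ne_zero hw, Complex.log_ofReal_mul ht hw, add_mul,
    Complex.exp_add, Complex.ofReal_log ht.le]

-- derivative of t ↦ (t:ℂ)^(1/2) for t > 0
lemma hasDerivAt_cpow_half {t : ℝ} (ht : 0 < t) :
    HasDerivAt (fun s : ℝ => (s:ℂ) ^ ((1:ℂ)/2))
      (((1:ℂ)/2) * (t:ℂ) ^ (-((1:ℂ)/2))) t := by
  have h0 : ((t:ℂ)) ∈ Complex.slitPlane := by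
    rw [Complex.mem_slitPlane_iff]; left; simpa using ht
  have h := (HasDerivAt.cpow_const (hasDerivAt_id ((t:ℂ))) h0 (c := (1:ℂ)/2)).comp_ofReal
  refine h.congr_deriv ?_
  rw [show (1:ℂ)/2 - 1 = -((1:ℂ)/2) by norm_num]
  simp [mul_comm]

lemma hasDerivAt_one_sub {z : ℂ} (hz : ‖z‖ < 1) (a : ℂ) {t : ℝ} (ht0 : 0 ≤ t) (ht1 : t ≤ 1) :
    HasDerivAt (fun s : ℝ => (1 - (s:ℂ) * z) ^ a)
      (a * (1 - (t:ℂ) * z) ^ (a - 1) * (-z)) t := by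
  have h0 : (1 - (t:ℂ) * z) ∈ Complex.slitPlane := by
    rw [Complex.mem_slitPlane_iff]; left
    have h1 : (1 - (t:ℂ) * z).re = 1 - t * z.re := by simp
    have h2 : |z.re| ≤ ‖z‖ := Complex.abs_re_le_norm z
    rw [h1]
    nlinarith [le_abs_self z.re, abs_nonneg z.re,
      mul_nonneg ht0 (sub_nonneg.mpr (le_abs_self z.re)),
      mul_nonneg (sub_nonneg.mpr ht1) (abs_nonneg z.re)]
  have hin : HasDerivAt (fun w : ℂ => 1 - w * z) (-z) ((t:ℂ)) := by
    simpa using ((hasDerivAt_id ((t:ℂ))).mul_const z).const_sub 1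
  exact ((hin.cpow_const h0).comp_ofReal)


lemma II_J1 {z : ℂ} (hz : ‖z‖ < 1) :
    IntervalIntegrable (fun t : ℝ => (t:ℂ) ^ (-((1:ℂ)/2)) * (1 - (t:ℂ) * z) ^ ((1:ℂ)/2))
      volume 0 1 := by
  apply IntervalIntegrable.mul_continuousOn
  · exact intervalIntegrable_cpow' (by norm_num)
  · simpa [Set.uIcc_of_le (by norm_num : (0:ℝ) ≤ 1)] using contOn_one_sub hz ((1:ℂ)/2)

lemma II_J2 {z : ℂ} (hz : ‖z‖ < 1) :
    IntervalIntegrable (fun t : ℝ => (t:ℂ) ^ ((1:ℂ)/2) * (1 - (t:ℂ) * z) ^ (-((1:ℂ)/2)))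
      volume 0 1 := by
  apply ContinuousOn.intervalIntegrable
  rw [Set.uIcc_of_le (by norm_num : (0:ℝ) ≤ 1)]
  exact contOn_cpow_half.mul (contOn_one_sub hz (-((1:ℂ)/2)))

lemma II_J3 {z : ℂ} (hz : ‖z‖ < 1) :
    IntervalIntegrable (fun t : ℝ => (1 - (t:ℂ) * z) ^ (-((1:ℂ)/2))) volume 0 1 := by
  apply ContinuousOn.intervalIntegrable
  simpa [Set.uIcc_of_le (by norm_num : (0:ℝ) ≤ 1)] using contOn_one_sub hz (-((1:ℂ)/2))

lemma claim2 {z : ℂ} (hz : ‖z‖ < 1) :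
    z * (∫ t in (0:ℝ)..1, (1 - (t:ℂ) * z) ^ (-((1:ℂ)/2)))
      = 2 * (1 - (1 - z) ^ ((1:ℂ)/2)) := by
  have key : (∫ t in (0:ℝ)..1, (-(z/2)) * (1 - (t:ℂ) * z) ^ (-((1:ℂ)/2)))
      = (1 - ((1:ℝ):ℂ) * z) ^ ((1:ℂ)/2) - (1 - ((0:ℝ):ℂ) * z) ^ ((1:ℂ)/2) := by
    apply intervalIntegral.integral_eq_sub_of_hasDerivAt
      (f := fun s : ℝ => (1 - (s:ℂ) * z) ^ ((1:ℂ)/2))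
    · intro t ht
      rw [Set.uIcc_of_le (by norm_num : (0:ℝ) ≤ 1)] at ht
      have h := hasDerivAt_one_sub hz ((1:ℂ)/2) ht.1 ht.2
      refine h.congr_deriv ?_
      rw [show (1:ℂ)/2 - 1 = -((1:ℂ)/2) by norm_num]
      ring
    · exact (II_J3 hz).const_mul _
  rw [intervalIntegral.integral_const_mul] at key
  push_cast at key
  simp only [one_mul, zero_mul, sub_zero, Complex.one_cpow] at key
  linear_combination (-2 : ℂ) * key

lemma claim1 {z : ℂ} (hz : ‖z‖ < 1) :
    (∫ t in (0:ℝ)..1, (t:ℂ) ^ (-((1:ℂ)/2)) * (1 - (t:ℂ) * z) ^ ((1:ℂ)/2))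
      = 2 * (1 - z) ^ ((1:ℂ)/2)
        + z * ∫ t in (0:ℝ)..1, (t:ℂ) ^ ((1:ℂ)/2) * (1 - (t:ℂ) * z) ^ (-((1:ℂ)/2)) := by
  set f' : ℝ → ℂ := fun t =>
    (t:ℂ) ^ (-((1:ℂ)/2)) * (1 - (t:ℂ) * z) ^ ((1:ℂ)/2)
      - z * ((t:ℂ) ^ ((1:ℂ)/2) * (1 - (t:ℂ) * z) ^ (-((1:ℂ)/2))) with hf'
  have key : (∫ t in (0:ℝ)..1, f' t)
      = 2 * ((1:ℝ):ℂ) ^ ((1:ℂ)/2) * (1 - ((1:ℝ):ℂ) * z) ^ ((1:ℂ)/2)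
        - 2 * ((0:ℝ):ℂ) ^ ((1:ℂ)/2) * (1 - ((0:ℝ):ℂ) * z) ^ ((1:ℂ)/2) := by
    apply intervalIntegral.integral_eq_sub_of_hasDerivAt_of_le
      (f := fun s : ℝ => 2 * (s:ℂ) ^ ((1:ℂ)/2) * (1 - (s:ℂ) * z) ^ ((1:ℂ)/2)) (by norm_num)
    · exact (continuousOn_const.mul contOn_cpow_half).mul (contOn_one_sub hz _)
    · intro t ht
      have h1 := hasDerivAt_cpow_half ht.1
      have h2 := hasDerivAt_one_sub hz ((1:ℂ)/2) ht.1.le ht.2.le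
      have h := (h1.const_mul (2:ℂ)).mul h2
      refine h.congr_deriv ?_
      rw [hf']
      rw [show (1:ℂ)/2 - 1 = -((1:ℂ)/2) by norm_num]
      ring
    · exact (II_J1 hz).sub ((II_J2 hz).const_mul z)
  rw [hf'] at key
  rw [intervalIntegral.integral_sub (II_J1 hz) ((II_J2 hz).const_mul z),
    intervalIntegral.integral_const_mul] at key
  push_cast at key
  simp only [one_mul, zero_mul, sub_zero, Complex.one_cpow,
    Complex.zero_cpow (c_ne), mul_zero, zero_mul] at key
  linear_combination key


lemma T_real {x : ℝ} (hx : |x| < 1) : (Tfun (x:ℂ)).im = 0 := by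
  have key : EqOn
      (fun t : ℝ => ((t:ℂ) ^ ((1:ℂ)/2) - 1) * (1 - (t:ℂ) * (x:ℂ)) ^ (-((1:ℂ)/2)))
      (fun t : ℝ => (((t ^ (1/2:ℝ) - 1) * (1 - t*x) ^ (-(1/2):ℝ) : ℝ) : ℂ))
      (Set.uIcc (0:ℝ) 1) := by
    intro t ht
    rw [Set.uIcc_of_le (by norm_num : (0:ℝ) ≤ 1)] at ht
    have h0 : (0:ℝ) ≤ 1 - t * x := by
      nlinarith [le_abs_self x, abs_nonneg x, mul_nonneg ht.1 (sub_nonneg.mpr (le_abs_self x)),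
        mul_nonneg (sub_nonneg.mpr ht.2) (abs_nonneg x)]
    have h1 : ((t ^ (1/2:ℝ) : ℝ) : ℂ) = (t:ℂ) ^ ((1:ℂ)/2) := by
      rw [Complex.ofReal_cpow ht.1]; norm_num
    have h2 : (1 - (t:ℂ) * (x:ℂ)) = (((1 - t * x : ℝ)) : ℂ) := by push_cast; ring
    have h3 : (((1 - t*x) ^ (-(1/2):ℝ) : ℝ) : ℂ) = (((1 - t*x : ℝ)) : ℂ) ^ (-((1:ℂ)/2)) := by
      rw [Complex.ofReal_cpow h0]; norm_num
    simp only [h2]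
    rw [← h1, ← h3]
    push_cast
    ring
  rw [Tfun, intervalIntegral.integral_congr key, intervalIntegral.integral_ofReal]
  simp

lemma T_diff : DifferentiableOn ℂ Tfun (ball (0:ℂ) 1) := by
  intro z₀ hz₀
  rw [mem_ball_zero_iff] at hz₀
  set ε : ℝ := (1 - ‖z₀‖)/2 with hεdef
  have hε : 0 < ε := by simp only [hεdef]; linarith
  have hmem : ∀ z ∈ ball z₀ ε, ‖z‖ < 1 := by
    intro z hzb
    rw [mem_ball, dist_eq_norm] at hzb
    have : ‖z‖ ≤ ‖z₀‖ + ‖z - z₀‖ := by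
      calc ‖z‖ = ‖z₀ + (z - z₀)‖ := by ring_nf
      _ ≤ ‖z₀‖ + ‖z - z₀‖ := norm_add_le _ _
    simp only [hεdef] at hzb; linarith [norm_nonneg z₀]
  set M : ℝ := ε ^ (-(3/2):ℝ) with hMdef
  have hM : 0 ≤ M := Real.rpow_nonneg hε.le _
  have key := intervalIntegral.hasDerivAt_integral_of_dominated_loc_of_deriv_le
    (μ := volume) (a := (0:ℝ)) (b := 1)
    (F := fun z (t:ℝ) => ((t:ℂ) ^ ((1:ℂ)/2) - 1) * (1 - (t:ℂ) * z) ^ (-((1:ℂ)/2)))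
    (F' := fun z (t:ℝ) => ((t:ℂ) ^ ((1:ℂ)/2) - 1) *
      ((-((1:ℂ)/2)) * (1 - (t:ℂ) * z) ^ (-((1:ℂ)/2) - 1) * (-(t:ℂ))))
    (x₀ := z₀) (bound := fun _ => 2 * M) (ball_mem_nhds z₀ hε) ?_ ?_ ?_ ?_ ?_ ?_
  · exact ((key.2.differentiableAt).const_mul ((1:ℂ)/2)).differentiableWithinAt
  · -- hF_meas
    filter_upwards [ball_mem_nhds z₀ hε] with z hzb
    rw [Set.uIoc_of_le (by norm_num : (0:ℝ) ≤ 1)]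
    exact ((contOn_F (hmem z hzb)).mono Set.Ioc_subset_Icc_self).aestronglyMeasurable
      measurableSet_Ioc
  · -- hF_int
    apply ContinuousOn.intervalIntegrable
    rw [Set.uIcc_of_le (by norm_num : (0:ℝ) ≤ 1)]
    exact contOn_F hz₀
  · -- hF'_meas
    rw [Set.uIoc_of_le (by norm_num : (0:ℝ) ≤ 1)]
    have : ContinuousOn (fun t:ℝ => ((t:ℂ) ^ ((1:ℂ)/2) - 1) *
        ((-((1:ℂ)/2)) * (1 - (t:ℂ) * z₀) ^ (-((1:ℂ)/2) - 1) * (-(t:ℂ)))) (Icc (0:ℝ) 1) :=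
      (contOn_cpow_half.sub continuousOn_const).mul
        (((continuousOn_const.mul (contOn_one_sub hz₀ _)).mul
          (Complex.continuous_ofReal.neg.continuousOn)))
    exact (this.mono Set.Ioc_subset_Icc_self).aestronglyMeasurable measurableSet_Ioc
  · -- h_bound
    refine Filter.Eventually.of_forall (fun t ht z hzb => ?_)
    rw [Set.uIoc_of_le (by norm_num : (0:ℝ) ≤ 1)] at ht
    have hz1 : ‖z‖ < 1 := hmem z hzb
    have hεle : ε ≤ ‖1 - (t:ℂ) * z‖ := by
      have h1 := norm_one_sub_ge (z := z) ht.1.le ht.2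
      rw [mem_ball, dist_eq_norm] at hzb
      have : ‖z‖ ≤ ‖z₀‖ + ‖z - z₀‖ := by
        calc ‖z‖ = ‖z₀ + (z - z₀)‖ := by ring_nf
        _ ≤ ‖z₀‖ + ‖z - z₀‖ := norm_add_le _ _
      simp only [hεdef] at *
      linarith
    have hne : (1 - (t:ℂ) * z) ≠ 0 := by
      intro h; rw [h, norm_zero] at hεle; linarith
    rw [norm_mul, norm_mul, norm_mul]
    have hA : ‖(t:ℂ) ^ ((1:ℂ)/2) - 1‖ ≤ 2 := by
      have h1 : ‖(t:ℂ) ^ ((1:ℂ)/2)‖ = t ^ ((1:ℝ)/2) := by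
        rw [Complex.norm_cpow_eq_rpow_re_of_pos ht.1]
        norm_num
      calc ‖(t:ℂ) ^ ((1:ℂ)/2) - 1‖ ≤ ‖(t:ℂ) ^ ((1:ℂ)/2)‖ + ‖(1:ℂ)‖ := norm_sub_le _ _
      _ ≤ 1 + 1 := by
          rw [h1, norm_one]
          gcongr
          exact Real.rpow_le_one ht.1.le ht.2 (by norm_num)
      _ = 2 := by norm_num
    have hB : ‖(1 - (t:ℂ) * z) ^ (-((1:ℂ)/2) - 1)‖ ≤ M := by
      have h1 : ‖(1 - (t:ℂ) * z) ^ (-((1:ℂ)/2) - 1)‖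
          = ‖1 - (t:ℂ) * z‖ ^ (-(3/2):ℝ) := by
        rw [Complex.norm_cpow_of_ne_zero hne]
        norm_num
      rw [h1, hMdef]
      exact Real.rpow_le_rpow_of_nonpos hε hεle (by norm_num)
    have hC : ‖-((1:ℂ)/2)‖ = 1/2 := by norm_num
    have hD : ‖-(t:ℂ)‖ ≤ 1 := by
      rw [norm_neg, Complex.norm_real, Real.norm_eq_abs, _root_.abs_of_nonneg ht.1.le]
      exact ht.2
    calc ‖(t:ℂ) ^ ((1:ℂ)/2) - 1‖ * (‖-((1:ℂ)/2)‖ * ‖(1 - (t:ℂ) * z) ^ (-((1:ℂ)/2) - 1)‖ * ‖-(t:ℂ)‖)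
        ≤ 2 * (1/2 * M * 1) := by
          gcongr
          · rw [hC]
      _ ≤ 2 * M := by nlinarith
  · exact intervalIntegrable_const
  · -- h_diff
    refine Filter.Eventually.of_forall (fun t ht z hzb => ?_)
    rw [Set.uIoc_of_le (by norm_num : (0:ℝ) ≤ 1)] at ht
    have hz1 : ‖z‖ < 1 := hmem z hzb
    have hslit : (1 - (t:ℂ) * z) ∈ Complex.slitPlane := slit_mem hz1 ht.1.le ht.2
    have hin : HasDerivAt (fun w : ℂ => 1 - (t:ℂ) * w) (-(t:ℂ)) z := by
      simpa using ((hasDerivAt_id z).const_mul ((t:ℂ))).const_sub 1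
    exact (hin.cpow_const hslit).const_mul _

lemma main_eq {z : ℂ} (hz : ‖z‖ < 1) (hz0 : z ≠ 0) (hzc : z ∉ Complex.ofReal '' Set.Ici 0) :
    phiRight z = (-4 : ℂ) * (-z) ^ ((1:ℂ)/2) * (1 + z * Tfun z) := by
  have hnz : -z ≠ 0 := neg_ne_zero.mpr hz0
  set J₁ : ℂ := ∫ t in (0:ℝ)..1, (t:ℂ) ^ (-((1:ℂ)/2)) * (1 - (t:ℂ) * z) ^ ((1:ℂ)/2) with hJ1
  set J₂ : ℂ := ∫ t in (0:ℝ)..1, (t:ℂ) ^ ((1:ℂ)/2) * (1 - (t:ℂ) * z) ^ (-((1:ℂ)/2)) with hJ2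
  set J₃ : ℂ := ∫ t in (0:ℝ)..1, (1 - (t:ℂ) * z) ^ (-((1:ℂ)/2)) with hJ3
  set w : ℂ := (-z) ^ ((1:ℂ)/2) with hw
  have hww : w * w = -z := by
    rw [hw, ← Complex.cpow_add _ _ hnz]
    norm_num
  have hw0 : w ≠ 0 := by
    intro h
    rw [h, mul_zero] at hww
    exact hnz hww.symm
  have hstepA : (∫ t in (0:ℝ)..1, (1 - (t:ℂ) * z) ^ ((1:ℂ)/2) * (-((t:ℂ) * z)) ^ (-((1:ℂ)/2)))
      = J₁ * w⁻¹ := by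
    rw [hJ1, ← Complex.cpow_neg, ← intervalIntegral.integral_mul_const]
    apply intervalIntegral.integral_congr
    intro t ht
    rw [Set.uIcc_of_le (by norm_num : (0:ℝ) ≤ 1)] at ht
    rcases eq_or_lt_of_le ht.1 with h | h
    · rw [← h]
      simp [Complex.zero_cpow nc_ne]
    · have he : -((t:ℂ) * z) = (t:ℂ) * (-z) := by ring
      simp only [he, cpow_ofReal_mul h hnz]
      ring
  have hTz : Tfun z = 1/2 * (J₂ - J₃) := by
    rw [Tfun, hJ2, hJ3, ← intervalIntegral.integral_sub (II_J2 hz) (II_J3 hz)]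
    congr 1
    apply intervalIntegral.integral_congr
    intro t _
    ring
  have e1 : J₁ = 2 * (1 - z) ^ ((1:ℂ)/2) + z * J₂ := claim1 hz
  have e2 : z * J₃ = 2 * (1 - (1 - z) ^ ((1:ℂ)/2)) := claim2 hz
  have hzw : z * w⁻¹ = -w := by
    rw [show z = -(w*w) by linear_combination hww]
    field_simp
  rw [phiRight, hstepA, hTz]
  linear_combination (2*J₁)*hzw + (-2*w)*e1 + (-2*w)*e2

end Stmt4

/-- There is a function `T`, analytic on `B(0,1)` and real on real points,
with `φ_→(z) = −4(−z)^{1/2}(1 + zT(z))` off the cut `[0,∞)`. -/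
theorem stmt_4 :
    ∃ T : ℂ → ℂ, DifferentiableOn ℂ T (ball (0 : ℂ) 1) ∧
      (∀ x : ℝ, (x : ℂ) ∈ ball (0 : ℂ) 1 → (T x).im = 0) ∧
      ∀ z ∈ ball (0 : ℂ) 1, z ∉ (Complex.ofReal '' Set.Ici 0) →
        phiRight z = (-4 : ℂ) * (-z) ^ ((1 : ℂ)/2) * (1 + z * T z) := by
  refine ⟨Stmt4.Tfun, Stmt4.T_diff, ?_, ?_⟩
  · intro x hx
    rw [mem_ball_zero_iff, Complex.norm_real, Real.norm_eq_abs] at hx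
    exact Stmt4.T_real hx
  · intro z hz hzc
    rw [mem_ball_zero_iff] at hz
    have hz0 : z ≠ 0 := by
      rintro rfl
      exact hzc ⟨0, Set.self_mem_Ici, by simp⟩
    exact Stmt4.main_eq hz hz0 hzc
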